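/- arXiv:1608.00511 — 4 statements merged into one kernel-verified Lean document; each statement's English description precedes it below -/
import Mathlib

section
/- Let h > 0 be a real number, k ≥ 1 an integer, φ : ℝ → ℝ any function and x ∈ ℝ. With θ_k^l := ∫_{l/k}^{(l+1)/k} (1−θ) dθ = (2k−2l−1)/(2k²) and δ_{−h}δ_hφ(y) := (φ(y+h) − 2φ(y) + φ(y−h))/h², one has the identity Σ_{l=0}^{k−1} θ_k^l · δ_{−h}δ_hφ(x − l h) = (1/(2k²h²)) · ( φ(x−kh) + φ(x−(k−1)h) + (2k−1)·φ(x+h) − (2k+1)·φ(x) ). -/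
open MeasureTheory

lemma telescope_aux (b : ℕ → ℝ) (k : ℕ) :
    ∑ l ∈ Finset.range k, (b l - 2 * b (l+1) + b (l+2)) =
      b (k+1) - b k - b 1 + b 0 := by
  induction k with
  | zero => simp
  | succ n ih => rw [Finset.sum_range_succ, ih]; ring

lemma sum_lemma (b : ℕ → ℝ) : ∀ k : ℕ, 1 ≤ k →
    ∑ l ∈ Finset.range k, (2*(k:ℝ) - 2*l - 1) * (b l - 2 * b (l+1) + b (l+2)) =
      b (k+1) + b k + (2*(k:ℝ) - 1) * b 0 - (2*(k:ℝ) + 1) * b 1 := by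
  intro k
  induction k with
  | zero => omega
  | succ n ih =>
    intro _
    rcases Nat.eq_zero_or_pos n with hn | hn
    · subst hn; simp; ring
    have key : ∀ l ∈ Finset.range n,
        (2*((n:ℝ)+1) - 2*l - 1) * (b l - 2 * b (l+1) + b (l+2)) =
        (2*(n:ℝ) - 2*l - 1) * (b l - 2 * b (l+1) + b (l+2))
          + 2 * (b l - 2 * b (l+1) + b (l+2)) := by
      intro l _; ring
    rw [Finset.sum_range_succ]
    push_cast
    rw [Finset.sum_congr rfl key, Finset.sum_add_distrib,
      ih hn, ← Finset.mul_sum, telescope_aux]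
    ring

/-- Summation identity for the weighted second differences, case `s_k = −1`:
`Σ_{l=0}^{k−1} θ_k^l · δ_{−h}δ_hφ(x − l h) = (1/(2k²h²)) (φ(x−kh) + φ(x−(k−1)h) + (2k−1)φ(x+h) − (2k+1)φ(x))`,
where `θ_k^l = ∫_{l/k}^{(l+1)/k} (1−θ) dθ`. -/
theorem weighted_second_difference_sum_left
    (h : ℝ) (hh : 0 < h) (k : ℕ) (hk : 1 ≤ k) (φ : ℝ → ℝ) (x : ℝ) :
    ∑ l ∈ Finset.range k,
      (∫ θ in ((l : ℝ) / (k : ℝ))..(((l : ℝ) + 1) / (k : ℝ)), (1 - θ)) *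
        ((φ (x - (l : ℝ) * h + h) - 2 * φ (x - (l : ℝ) * h) + φ (x - (l : ℝ) * h - h)) / h ^ 2)
      = (1 / (2 * (k : ℝ) ^ 2 * h ^ 2)) *
        (φ (x - (k : ℝ) * h) + φ (x - ((k : ℝ) - 1) * h)
          + (2 * (k : ℝ) - 1) * φ (x + h) - (2 * (k : ℝ) + 1) * φ x) := by
  have hk0 : (k : ℝ) ≠ 0 := by positivity
  have hh0 : h ≠ 0 := ne_of_gt hh
  have hint : ∀ a b : ℝ, (∫ θ in a..b, (1 - θ)) = (b - b^2/2) - (a - a^2/2) := by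
    intro a b
    rw [intervalIntegral.integral_sub intervalIntegrable_const
      (intervalIntegral.intervalIntegrable_id)]
    simp [integral_id]
    ring
  set b : ℕ → ℝ := fun l => φ (x - ((l:ℝ) - 1) * h) with hb
  have hterm : ∀ l ∈ Finset.range k,
      (∫ θ in ((l : ℝ) / (k : ℝ))..(((l : ℝ) + 1) / (k : ℝ)), (1 - θ)) *
        ((φ (x - (l : ℝ) * h + h) - 2 * φ (x - (l : ℝ) * h) + φ (x - (l : ℝ) * h - h)) / h ^ 2)
      = (1 / (2 * (k : ℝ) ^ 2 * h ^ 2)) *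
          ((2*(k:ℝ) - 2*l - 1) * (b l - 2 * b (l+1) + b (l+2))) := by
    intro l _
    have e0 : b l = φ (x - (l : ℝ) * h + h) := by
      simp only [hb]; ring_nf
    have e1 : b (l+1) = φ (x - (l : ℝ) * h) := by
      simp only [hb]; push_cast; ring_nf
    have e2 : b (l+2) = φ (x - (l : ℝ) * h - h) := by
      simp only [hb]; push_cast; ring_nf
    rw [hint, e0, e1, e2]
    field_simp
    ring
  rw [Finset.sum_congr rfl hterm, ← Finset.mul_sum, sum_lemma b k hk]
  have f0 : b 0 = φ (x + h) := by simp [hb]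
  have f1 : b 1 = φ x := by simp [hb]
  have fk : b (k+1) = φ (x - (k:ℝ) * h) := by simp only [hb]; push_cast; ring_nf
  have fk1 : b k = φ (x - ((k:ℝ) - 1) * h) := by simp only [hb]
  rw [f0, f1, fk, fk1]
end

section
/- Let ν be a Lévy measure, n a positive integer and h = 1/n. Then for every square integrable φ : ℝ → ℝ, each summand of the series Σ_{k∈𝔹_h} ν(B_k^h) · ( ∫_ℝ φ(x+hk)φ(x) dx − ∫_ℝ φ(x)² dx ) is nonpositive; in particular the series converges and its sum is ≤ 0. (This expresses the negative semi-definiteness ⟨J_2^hφ, φ⟩_{L²} ≤ 0 of the tail operator J_2^h.) -/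
open MeasureTheory

/-- The grid cell `B_k^h`: for `k ≥ 1` it is `((k−1)h, kh]`, for `k ≤ −1` it is `[kh, (k+1)h)`. -/
noncomputable def levyCell (h : ℝ) (k : ℤ) : Set ℝ :=
  if 0 < k then Set.Ioc (((k : ℝ) - 1) * h) ((k : ℝ) * h)
  else Set.Ico ((k : ℝ) * h) (((k : ℝ) + 1) * h)

lemma levyCell_measurable (h : ℝ) (k : ℤ) : MeasurableSet (levyCell h k) := by
  unfold levyCell
  split
  · exact measurableSet_Ioc
  · exact measurableSet_Ico

lemma levyCell_disjoint {h : ℝ} (hh : 0 < h) {k l : ℤ} (hk : k ≠ 0) (hl : l ≠ 0)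
    (hkl : k ≠ l) : Disjoint (levyCell h k) (levyCell h l) := by
  rw [Set.disjoint_left]
  intro z hzk hzl
  unfold levyCell at hzk hzl
  rcases lt_trichotomy 0 k with hk0 | hk0 | hk0
  · rw [if_pos hk0] at hzk
    rcases lt_trichotomy 0 l with hl0 | hl0 | hl0
    · rw [if_pos hl0] at hzl
      rcases lt_or_gt_of_ne hkl with hlt | hlt
      · have h1 : (k : ℝ) ≤ (l : ℝ) - 1 := by
          have h' : k + 1 ≤ l := hlt
          have h'' : ((k : ℝ)) + 1 ≤ (l : ℝ) := by exact_mod_cast h'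
          linarith
        nlinarith [hzk.2, hzl.1, hh]
      · have h1 : (l : ℝ) ≤ (k : ℝ) - 1 := by
          have h' : l + 1 ≤ k := hlt
          have h'' : ((l : ℝ)) + 1 ≤ (k : ℝ) := by exact_mod_cast h'
          linarith
        nlinarith [hzl.2, hzk.1, hh]
    · exact hl hl0.symm
    · rw [if_neg (by omega)] at hzl
      have h1 : (1 : ℝ) ≤ (k : ℝ) := by exact_mod_cast hk0
      have h2 : (l : ℝ) + 1 ≤ 0 := by
        have : l + 1 ≤ 0 := by omega
        exact_mod_cast this
      nlinarith [hzk.1, hzl.2, hh]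
  · exact hk hk0.symm
  · rw [if_neg (by omega)] at hzk
    rcases lt_trichotomy 0 l with hl0 | hl0 | hl0
    · rw [if_pos hl0] at hzl
      have h1 : (1 : ℝ) ≤ (l : ℝ) := by exact_mod_cast hl0
      have h2 : (k : ℝ) + 1 ≤ 0 := by
        have : k + 1 ≤ 0 := by omega
        exact_mod_cast this
      nlinarith [hzl.1, hzk.2, hh]
    · exact hl hl0.symm
    · rw [if_neg (by omega)] at hzl
      rcases lt_or_gt_of_ne hkl with hlt | hlt
      · have h1 : (k : ℝ) + 1 ≤ (l : ℝ) := by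
          have : k + 1 ≤ l := hlt
          exact_mod_cast this
        nlinarith [hzk.2, hzl.1, hh]
      · have h1 : (l : ℝ) + 1 ≤ (k : ℝ) := by
          have : l + 1 ≤ k := hlt
          exact_mod_cast this
        nlinarith [hzl.2, hzk.1, hh]

lemma levyCell_subset {n : ℕ} (hn : 0 < n) {k : ℤ} (hk : (n : ℤ) < |k|) :
    levyCell (1 / n) k ⊆ {z : ℝ | 1 ≤ |z|} := by
  have hh : (0 : ℝ) < 1 / n := by positivity
  have hnn : (0 : ℝ) < (n : ℝ) := by exact_mod_cast hn
  intro z hz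
  unfold levyCell at hz
  rcases lt_trichotomy 0 k with hk0 | hk0 | hk0
  · rw [if_pos hk0] at hz
    have hkn : (n : ℤ) + 1 ≤ k := by
      rw [abs_of_pos hk0] at hk; omega
    have h1 : (n : ℝ) ≤ (k : ℝ) - 1 := by
      have h' : ((n : ℝ) + 1) ≤ (k : ℝ) := by exact_mod_cast hkn
      linarith
    have : (1 : ℝ) ≤ ((k : ℝ) - 1) * (1 / n) := by
      have h2 := mul_le_mul_of_nonneg_right h1 hh.le
      have h3 : (n : ℝ) * (1 / n) = 1 := by field_simp
      linarith
    have hz1 : (1 : ℝ) ≤ z := le_of_lt (lt_of_le_of_lt this hz.1)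
    simp only [Set.mem_setOf_eq]
    rw [abs_of_nonneg (by linarith)]; exact hz1
  · rw [← hk0, abs_zero] at hk; omega
  · rw [if_neg (by omega)] at hz
    have hkn : k + 1 ≤ -(n : ℤ) := by
      rw [abs_of_neg hk0] at hk; omega
    have h1 : (k : ℝ) + 1 ≤ -(n : ℝ) := by exact_mod_cast hkn
    have : ((k : ℝ) + 1) * (1 / n) ≤ -1 := by
      have := mul_le_mul_of_nonneg_right h1 (le_of_lt hh)
      calc ((k : ℝ) + 1) * (1 / n) ≤ -(n : ℝ) * (1 / n) := this
        _ = -1 := by field_simp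
    have hz1 : z ≤ -1 := le_of_lt (lt_of_lt_of_le hz.2 this)
    simp only [Set.mem_setOf_eq]
    rw [abs_of_nonpos (by linarith)]; linarith

lemma abs_integral_shift_mul_le (φ : ℝ → ℝ) (hφ : MemLp φ 2 (volume : Measure ℝ)) (a : ℝ) :
    |∫ x, φ (x + a) * φ x| ≤ ∫ x, φ x ^ 2 := by
  set ψ : ℝ → ℝ := fun x => φ (x + a) with hψdef
  have hψ : MemLp ψ 2 (volume : Measure ℝ) :=
    hφ.comp_measurePreserving (measurePreserving_add_right volume a)
  have hψsq : Integrable (fun x => ψ x ^ 2) volume := hψ.integrable_sq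
  have hφsq : Integrable (fun x => φ x ^ 2) volume := hφ.integrable_sq
  have hbound : Integrable (fun x => (ψ x ^ 2 + φ x ^ 2) / 2) volume :=
    (hψsq.add hφsq).div_const 2
  have hmul : Integrable (fun x => ψ x * φ x) volume := by
    refine Integrable.mono' hbound (hψ.aestronglyMeasurable.mul hφ.aestronglyMeasurable)
      (Filter.Eventually.of_forall fun x => ?_)
    rw [Real.norm_eq_abs, abs_mul]
    nlinarith [sq_nonneg (|ψ x| - |φ x|), abs_nonneg (ψ x), abs_nonneg (φ x),
      sq_abs (ψ x), sq_abs (φ x)]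
  have hshift : ∫ x, ψ x ^ 2 = ∫ x, φ x ^ 2 := by
    simpa using integral_add_right_eq_self (fun x => φ x ^ 2) a
  have hI : ∫ x, (ψ x ^ 2 + φ x ^ 2) / 2 = ∫ x, φ x ^ 2 := by
    rw [integral_div, integral_add hψsq hφsq, hshift]; ring
  have hupper : ∫ x, ψ x * φ x ≤ ∫ x, φ x ^ 2 := by
    rw [← hI]
    refine integral_mono hmul hbound fun x => ?_
    nlinarith [sq_nonneg (ψ x - φ x)]
  have hlower : -(∫ x, φ x ^ 2) ≤ ∫ x, ψ x * φ x := by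
    have : ∫ x, -(ψ x * φ x) ≤ ∫ x, φ x ^ 2 := by
      rw [← hI]
      refine integral_mono hmul.neg hbound fun x => ?_
      nlinarith [sq_nonneg (ψ x + φ x)]
    rw [integral_neg] at this; linarith
  exact abs_le.mpr ⟨hlower, hupper⟩

/-- Negative semi-definiteness of the tail operator `J_2^h`: for a Lévy measure `ν`, `h = 1/n`
and square integrable `φ`, each summand of
`Σ_{|k|>n} ν(B_k^h) (⟨φ(·+hk), φ⟩ − ‖φ‖²)` is nonpositive, the series is summable, and its
sum is nonpositive. -/
theorem tail_operator_negative_semidefinite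
    (ν : Measure ℝ) (hν0 : ν {0} = 0)
    (hνint : ∫⁻ z, ENNReal.ofReal (min 1 (z ^ 2)) ∂ν < ⊤)
    (n : ℕ) (hn : 0 < n) (φ : ℝ → ℝ) (hφ : MemLp φ 2 (volume : Measure ℝ)) :
    (∀ k : ℤ, (n : ℤ) < |k| →
      (ν (levyCell (1 / n) k)).toReal *
        ((∫ x, φ (x + (1 / n : ℝ) * (k : ℝ)) * φ x) - ∫ x, φ x ^ 2) ≤ 0) ∧
    Summable (fun k : ℤ => if (n : ℤ) < |k| then
      (ν (levyCell (1 / n) k)).toReal *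
        ((∫ x, φ (x + (1 / n : ℝ) * (k : ℝ)) * φ x) - ∫ x, φ x ^ 2) else 0) ∧
    (∑' k : ℤ, if (n : ℤ) < |k| then
      (ν (levyCell (1 / n) k)).toReal *
        ((∫ x, φ (x + (1 / n : ℝ) * (k : ℝ)) * φ x) - ∫ x, φ x ^ 2) else 0) ≤ 0 := by
  have hh : (0 : ℝ) < 1 / n := by positivity
  set M : ℝ := ∫ x, φ x ^ 2 with hM
  have hM0 : 0 ≤ M := integral_nonneg fun x => sq_nonneg _
  -- each summand nonpositive
  have habs : ∀ k : ℤ, |∫ x, φ (x + (1 / n : ℝ) * (k : ℝ)) * φ x| ≤ M :=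
    fun k => abs_integral_shift_mul_le φ hφ _
  have part1 : ∀ k : ℤ, (n : ℤ) < |k| →
      (ν (levyCell (1 / n) k)).toReal *
        ((∫ x, φ (x + (1 / n : ℝ) * (k : ℝ)) * φ x) - M) ≤ 0 := by
    intro k _
    apply mul_nonpos_of_nonneg_of_nonpos ENNReal.toReal_nonneg
    have := (abs_le.mp (habs k)).2
    linarith
  -- summability of the measures of the cells
  set D : ℤ → Set ℝ := fun k => if (n : ℤ) < |k| then levyCell (1 / n) k else ∅ with hD
  have hDmeas : ∀ k, MeasurableSet (D k) := by
    intro k; rw [hD]; dsimp only; split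
    · exact levyCell_measurable _ _
    · exact MeasurableSet.empty
  have hne0 : ∀ m : ℤ, (n : ℤ) < |m| → m ≠ 0 := by
    intro m hm h; rw [h, abs_zero] at hm; omega
  have hDdisj : Pairwise (Function.onFun Disjoint D) := by
    intro k l hkl
    rw [Function.onFun, hD]; dsimp only
    by_cases hck : (n : ℤ) < |k|
    · by_cases hcl : (n : ℤ) < |l|
      · rw [if_pos hck, if_pos hcl]
        exact levyCell_disjoint hh (hne0 k hck) (hne0 l hcl) hkl
      · rw [if_neg hcl]; exact Set.disjoint_empty _
    · rw [if_neg hck]; exact Set.empty_disjoint _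
  have hDsub : ∀ k, D k ⊆ {z : ℝ | 1 ≤ |z|} := by
    intro k; rw [hD]; dsimp only; split
    · exact levyCell_subset hn (by assumption)
    · exact Set.empty_subset _
  have hSmeas : MeasurableSet {z : ℝ | 1 ≤ |z|} := by
    have : {z : ℝ | 1 ≤ |z|} = {z : ℝ | z ≤ -1} ∪ {z : ℝ | 1 ≤ z} := by
      ext z; simp only [Set.mem_setOf_eq, Set.mem_union, le_abs]
      constructor
      · rintro (h | h)
        · right; exact h
        · left; linarith
      · rintro (h | h)
        · right; linarith
        · left; exact h
    rw [this]
    exact (measurableSet_Iic : MeasurableSet (Set.Iic (-1 : ℝ))).union measurableSet_Ici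
  have hSfin : ν {z : ℝ | 1 ≤ |z|} < ⊤ := by
    have h1 : ν {z : ℝ | 1 ≤ |z|} = ∫⁻ z in {z : ℝ | 1 ≤ |z|}, 1 ∂ν :=
      (setLIntegral_one _).symm
    have h2 : ∫⁻ z in {z : ℝ | 1 ≤ |z|}, 1 ∂ν
        ≤ ∫⁻ z in {z : ℝ | 1 ≤ |z|}, ENNReal.ofReal (min 1 (z ^ 2)) ∂ν := by
      refine setLIntegral_mono (by fun_prop) fun z hz => ?_
      have hz1 : (1 : ℝ) ≤ z ^ 2 := by
        have : (1 : ℝ) ≤ |z| := hz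
        nlinarith [sq_abs z, abs_nonneg z]
      rw [min_eq_left hz1, ENNReal.ofReal_one]
    have h3 : ∫⁻ z in {z : ℝ | 1 ≤ |z|}, ENNReal.ofReal (min 1 (z ^ 2)) ∂ν
        ≤ ∫⁻ z, ENNReal.ofReal (min 1 (z ^ 2)) ∂ν := setLIntegral_le_lintegral _ _
    calc ν {z : ℝ | 1 ≤ |z|} ≤ ∫⁻ z, ENNReal.ofReal (min 1 (z ^ 2)) ∂ν := by
          rw [h1]; exact le_trans h2 h3
      _ < ⊤ := hνint
  have htsum_ne : (∑' k : ℤ, ν (D k)) ≠ ⊤ := by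
    rw [← measure_iUnion hDdisj hDmeas]
    exact ne_top_of_le_ne_top hSfin.ne (measure_mono (Set.iUnion_subset hDsub))
  have hsumD : Summable fun k : ℤ => (ν (D k)).toReal := ENNReal.summable_toReal htsum_ne
  have hDtoReal : ∀ k : ℤ, (ν (D k)).toReal =
      if (n : ℤ) < |k| then (ν (levyCell (1 / n) k)).toReal else 0 := by
    intro k; rw [hD]; dsimp only; split
    · rfl
    · simp
  have part2 : Summable (fun k : ℤ => if (n : ℤ) < |k| then
      (ν (levyCell (1 / n) k)).toReal *
        ((∫ x, φ (x + (1 / n : ℝ) * (k : ℝ)) * φ x) - M) else 0) := by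
    refine Summable.of_norm_bounded (g := fun k => 2 * M * (ν (D k)).toReal)
      (hsumD.mul_left (2 * M)) fun k => ?_
    rw [hDtoReal k]
    by_cases hc : (n : ℤ) < |k|
    · rw [if_pos hc, if_pos hc, Real.norm_eq_abs, abs_mul,
        abs_of_nonneg ENNReal.toReal_nonneg, mul_comm (2 * M) _]
      refine mul_le_mul_of_nonneg_left ?_ ENNReal.toReal_nonneg
      have h1 := (abs_le.mp (habs k)).1
      have h2 := (abs_le.mp (habs k)).2
      rw [abs_le]; constructor <;> linarith
    · rw [if_neg hc, if_neg hc]; simp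
  exact ⟨part1, part2, tsum_nonpos fun k => by
    split
    · exact part1 k (by assumption)
    · exact le_refl 0⟩
end

section
/- Let h > 0, let K ≥ 0, and let a : ℝ → ℝ be twice differentiable with |a′(x)| ≤ K and |a″(x)| ≤ K for all x. Then for every square-summable grid function φ : ℤ → ℝ (the value at the grid point jh being φ(j)), | h Σ_{j∈ℤ} (δ^hφ)(j) · (δ^h a)(jh) · (T^hφ)(j) | ≤ (K/2) · h Σ_{j∈ℤ} φ(j)², where (δ^hφ)(j) = (φ(j+1) − φ(j−1))/(2h), (δ^h a)(x) = (a(x+h) − a(x−h))/(2h) and (T^hφ)(j) = (φ(j+1) + φ(j−1))/2. -/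
open MeasureTheory

lemma lip_of_deriv_bound (f : ℝ → ℝ) (hf : Differentiable ℝ f) (K : ℝ)
    (hK : ∀ x, |deriv f x| ≤ K) (x y : ℝ) : |f x - f y| ≤ K * |x - y| := by
  have := Convex.norm_image_sub_le_of_norm_hasDerivWithin_le
    (f' := deriv f) (fun z _ => (hf z).hasDerivAt.hasDerivWithinAt)
    (fun z _ => by simpa [Real.norm_eq_abs] using hK z) convex_univ
    (Set.mem_univ y) (Set.mem_univ x)
  simpa [Real.norm_eq_abs] using this

lemma secdiff_bound (a : ℝ → ℝ) (ha : Differentiable ℝ a) (ha' : Differentiable ℝ (deriv a))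
    (K : ℝ) (haK2 : ∀ x, |deriv (deriv a) x| ≤ K) (x t : ℝ) (ht : 0 ≤ t) :
    |a (x + t) - 2 * a x + a (x - t)| ≤ K * t ^ 2 := by
  set g : ℝ → ℝ := fun s => a (x + s) - a (x + s - t) with hg
  have hder : ∀ s, HasDerivAt g (deriv a (x + s) - deriv a (x + s - t)) s := by
    intro s
    have h1 : HasDerivAt (fun s : ℝ => a (x + s)) (deriv a (x + s)) s := by
      simpa [Function.comp_def] using (ha (x + s)).hasDerivAt.comp s ((hasDerivAt_id s).const_add x)
    have h2 : HasDerivAt (fun s : ℝ => a (x + s - t)) (deriv a (x + s - t)) s := by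
      have : HasDerivAt (fun s : ℝ => x + s - t) 1 s := by
        simpa using ((hasDerivAt_id s).const_add x).sub_const t
      simpa [Function.comp_def] using (ha (x + s - t)).hasDerivAt.comp s this
    exact h1.sub h2
  have hbound : ∀ s, |deriv a (x + s) - deriv a (x + s - t)| ≤ K * t := by
    intro s
    have := lip_of_deriv_bound (deriv a) ha' K haK2 (x + s) (x + s - t)
    calc |deriv a (x + s) - deriv a (x + s - t)| ≤ K * |x + s - (x + s - t)| := this
    _ = K * t := by rw [show x + s - (x + s - t) = t by ring, abs_of_nonneg ht]
  have key : |g t - g 0| ≤ (K * t) * |t - 0| := by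
    have := Convex.norm_image_sub_le_of_norm_hasDerivWithin_le
      (f' := fun s => deriv a (x + s) - deriv a (x + s - t))
      (fun z _ => (hder z).hasDerivWithinAt)
      (fun z _ => by simpa [Real.norm_eq_abs] using hbound z) convex_univ
      (Set.mem_univ (0:ℝ)) (Set.mem_univ t)
    simpa [Real.norm_eq_abs] using this
  have : g t - g 0 = a (x + t) - 2 * a x + a (x - t) := by
    simp only [hg]
    ring_nf
  calc |a (x + t) - 2 * a x + a (x - t)| = |g t - g 0| := by rw [this]
  _ ≤ (K * t) * |t - 0| := key
  _ = K * t ^ 2 := by rw [sub_zero, abs_of_nonneg ht]; ring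

noncomputable def cfun (a : ℝ → ℝ) (h : ℝ) (j : ℤ) : ℝ := (a ((j : ℝ) * h + h) - a ((j : ℝ) * h - h)) / (2 * h)

set_option maxHeartbeats 2000000 in
/-- Bound on the ℓ²(hℤ) inner product `|(δ^hφ, (δ^h a)T^hφ)_{ℓ²}| ≤ (K/2)‖φ‖²_{ℓ²}` for `a`
twice differentiable with `|a′| ≤ K`, `|a″| ≤ K`, and square-summable grid functions `φ`. -/
theorem grid_symmetric_difference_product_bound
    (h K : ℝ) (hh : 0 < h) (hK : 0 ≤ K) (a : ℝ → ℝ)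
    (ha : Differentiable ℝ a) (ha' : Differentiable ℝ (deriv a))
    (haK1 : ∀ x, |deriv a x| ≤ K) (haK2 : ∀ x, |deriv (deriv a) x| ≤ K)
    (φ : ℤ → ℝ) (hφ : Summable fun j : ℤ => φ j ^ 2) :
    |h * ∑' j : ℤ, ((φ (j + 1) - φ (j - 1)) / (2 * h)) *
        ((a ((j : ℝ) * h + h) - a ((j : ℝ) * h - h)) / (2 * h)) *
        ((φ (j + 1) + φ (j - 1)) / 2)|
      ≤ (K / 2) * (h * ∑' j : ℤ, φ j ^ 2) := by
  have hshow : (∑' j : ℤ, ((φ (j + 1) - φ (j - 1)) / (2 * h)) *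
        ((a ((j : ℝ) * h + h) - a ((j : ℝ) * h - h)) / (2 * h)) *
        ((φ (j + 1) + φ (j - 1)) / 2))
      = ∑' j : ℤ, ((φ (j + 1) - φ (j - 1)) / (2 * h)) * cfun a h j *
        ((φ (j + 1) + φ (j - 1)) / 2) := tsum_congr fun j => by simp only [cfun]
  rw [hshow]
  set c : ℤ → ℝ := cfun a h with hc
  -- |c j| ≤ K
  have hcK : ∀ j : ℤ, |c j| ≤ K := by
    intro j
    have hl := lip_of_deriv_bound a ha K haK1 ((j : ℝ) * h + h) ((j : ℝ) * h - h)
    have habs : |(j : ℝ) * h + h - ((j : ℝ) * h - h)| = 2 * h := by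
      rw [show (j : ℝ) * h + h - ((j : ℝ) * h - h) = 2 * h by ring, abs_of_nonneg (by linarith)]
    rw [hc]
    unfold cfun
    rw [abs_div, abs_of_nonneg (by linarith : (0:ℝ) ≤ 2 * h)]
    rw [div_le_iff₀ (by linarith)]
    calc |a ((j : ℝ) * h + h) - a ((j : ℝ) * h - h)| ≤ K * (2 * h) := by rw [← habs]; exact hl
    _ = K * (2 * h) := rfl
  -- shift summabilities
  have hφp : Summable fun j : ℤ => φ (j + 1) ^ 2 :=
    (Equiv.addRight (1 : ℤ)).summable_iff.mpr hφ
  have hφm : Summable fun j : ℤ => φ (j - 1) ^ 2 :=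
    (Equiv.subRight (1 : ℤ)).summable_iff.mpr hφ
  have hu : Summable fun j : ℤ => φ (j + 1) ^ 2 * c j := by
    apply Summable.of_norm_bounded (hφp.mul_right K)
    intro j
    rw [Real.norm_eq_abs, abs_mul, abs_of_nonneg (sq_nonneg _)]
    exact mul_le_mul_of_nonneg_left (hcK j) (sq_nonneg _)
  have hv : Summable fun j : ℤ => φ (j - 1) ^ 2 * c j := by
    apply Summable.of_norm_bounded (hφm.mul_right K)
    intro j
    rw [Real.norm_eq_abs, abs_mul, abs_of_nonneg (sq_nonneg _)]
    exact mul_le_mul_of_nonneg_left (hcK j) (sq_nonneg _)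
  have hu' : Summable fun j : ℤ => φ j ^ 2 * c (j - 1) := by
    apply Summable.of_norm_bounded (hφ.mul_right K)
    intro j
    rw [Real.norm_eq_abs, abs_mul, abs_of_nonneg (sq_nonneg _)]
    exact mul_le_mul_of_nonneg_left (hcK _) (sq_nonneg _)
  have hv' : Summable fun j : ℤ => φ j ^ 2 * c (j + 1) := by
    apply Summable.of_norm_bounded (hφ.mul_right K)
    intro j
    rw [Real.norm_eq_abs, abs_mul, abs_of_nonneg (sq_nonneg _)]
    exact mul_le_mul_of_nonneg_left (hcK _) (sq_nonneg _)
  -- rewrite the summand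
  have hterm : ∀ j : ℤ, ((φ (j + 1) - φ (j - 1)) / (2 * h)) * c j *
      ((φ (j + 1) + φ (j - 1)) / 2)
      = (φ (j + 1) ^ 2 * c j - φ (j - 1) ^ 2 * c j) / (4 * h) := by
    intro j; field_simp; ring
  have hsum1 : (∑' j : ℤ, ((φ (j + 1) - φ (j - 1)) / (2 * h)) * c j *
      ((φ (j + 1) + φ (j - 1)) / 2))
      = ((∑' j : ℤ, φ (j + 1) ^ 2 * c j) - ∑' j : ℤ, φ (j - 1) ^ 2 * c j) / (4 * h) := by
    rw [tsum_congr hterm, tsum_div_const, Summable.tsum_sub hu hv]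
  -- reindex
  have hre1 : (∑' j : ℤ, φ (j + 1) ^ 2 * c j) = ∑' j : ℤ, φ j ^ 2 * c (j - 1) := by
    have := (Equiv.addRight (1 : ℤ)).tsum_eq (fun j => φ j ^ 2 * c (j - 1))
    simpa using this
  have hre2 : (∑' j : ℤ, φ (j - 1) ^ 2 * c j) = ∑' j : ℤ, φ j ^ 2 * c (j + 1) := by
    have := (Equiv.subRight (1 : ℤ)).tsum_eq (fun j => φ j ^ 2 * c (j + 1))
    simpa using this
  -- bound on d j = c (j-1) - c (j+1)
  have hd : ∀ j : ℤ, |c (j - 1) - c (j + 1)| ≤ 2 * h * K := by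
    intro j
    have hsd := secdiff_bound a ha ha' K haK2 ((j : ℝ) * h) (2 * h) (by linarith)
    have heq : c (j - 1) - c (j + 1)
        = -((a ((j : ℝ) * h + 2 * h) - 2 * a ((j : ℝ) * h) + a ((j : ℝ) * h - 2 * h)) / (2 * h)) := by
      rw [hc]
      unfold cfun
      push_cast
      rw [show ((j : ℝ) - 1) * h + h = (j : ℝ) * h by ring,
        show ((j : ℝ) - 1) * h - h = (j : ℝ) * h - 2 * h by ring,
        show ((j : ℝ) + 1) * h + h = (j : ℝ) * h + 2 * h by ring,
        show ((j : ℝ) + 1) * h - h = (j : ℝ) * h by ring]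
      ring
    rw [heq, abs_neg, abs_div, abs_of_nonneg (by linarith : (0:ℝ) ≤ 2 * h),
      div_le_iff₀ (by linarith)]
    calc |a ((j : ℝ) * h + 2 * h) - 2 * a ((j : ℝ) * h) + a ((j : ℝ) * h - 2 * h)|
        ≤ K * (2 * h) ^ 2 := hsd
    _ = 2 * h * K * (2 * h) := by ring
  -- assemble
  have hw : Summable fun j : ℤ => φ j ^ 2 * (c (j - 1) - c (j + 1)) := by
    simpa [mul_sub] using hu'.sub hv'
  have hsum2 : (∑' j : ℤ, φ j ^ 2 * c (j - 1)) - (∑' j : ℤ, φ j ^ 2 * c (j + 1))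
      = ∑' j : ℤ, φ j ^ 2 * (c (j - 1) - c (j + 1)) := by
    rw [← Summable.tsum_sub hu' hv']
    exact tsum_congr fun j => by ring
  have hT : |∑' j : ℤ, φ j ^ 2 * (c (j - 1) - c (j + 1))|
      ≤ 2 * h * K * ∑' j : ℤ, φ j ^ 2 := by
    calc |∑' j : ℤ, φ j ^ 2 * (c (j - 1) - c (j + 1))|
        ≤ ∑' j : ℤ, |φ j ^ 2 * (c (j - 1) - c (j + 1))| := by
          simpa only [Real.norm_eq_abs] using norm_tsum_le_tsum_norm
            (f := fun j : ℤ => φ j ^ 2 * (c (j - 1) - c (j + 1)))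
            (by simpa only [Real.norm_eq_abs] using hw.abs)
    _ ≤ ∑' j : ℤ, φ j ^ 2 * (2 * h * K) := by
          apply Summable.tsum_le_tsum _ hw.abs (hφ.mul_right (2 * h * K))
          intro j
          rw [abs_mul, abs_of_nonneg (sq_nonneg _)]
          exact mul_le_mul_of_nonneg_left (hd j) (sq_nonneg _)
    _ = 2 * h * K * ∑' j : ℤ, φ j ^ 2 := by rw [tsum_mul_right]; ring
  rw [hsum1, hre1, hre2, hsum2]
  rw [abs_mul, abs_div, abs_of_pos hh, abs_of_nonneg (by linarith : (0:ℝ) ≤ 4 * h)]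
  have hφnn : 0 ≤ ∑' j : ℤ, φ j ^ 2 := tsum_nonneg fun j => sq_nonneg _
  calc h * (|∑' j : ℤ, φ j ^ 2 * (c (j - 1) - c (j + 1))| / (4 * h))
      ≤ h * ((2 * h * K * ∑' j : ℤ, φ j ^ 2) / (4 * h)) := by
        apply mul_le_mul_of_nonneg_left _ hh.le
        exact div_le_div_of_nonneg_right hT (by linarith)
  _ = (K / 2) * (h * ∑' j : ℤ, φ j ^ 2) := by field_simp; ring
end

section
/- Let X be a real Hilbert space, C ≥ 0, τ > 0, n a positive integer, and set T = nτ. Let R_1, …, R_n be bounded linear operators on X with ⟨R_i x, x⟩ ≤ C·‖x‖² for all x ∈ X and all i, and let F_1, …, F_n ∈ X. Suppose e_0, e_1, …, e_n ∈ X satisfy e_0 = 0 and e_i = e_{i−1} + τ·R_i e_i + F_i for i = 1, …, n. If (2C+1)·τ ≤ 1/2, then max_{0≤i≤n} ‖e_i‖² ≤ 2·e^{2(2C+1)T} · τ^{−1} · Σ_{i=1}^n ‖F_i‖². -/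
open scoped RealInnerProductSpace

set_option maxHeartbeats 1000000 in
/-- Discrete stability estimate for the implicit Euler scheme: if `⟨R_i x, x⟩ ≤ C‖x‖²`,
`e_0 = 0` and `e_i = e_{i−1} + τ R_i e_i + F_i` for `i = 1,…,n`, and `(2C+1)τ ≤ 1/2`, then
`max_{i≤n} ‖e_i‖² ≤ 2 e^{2(2C+1)T} τ⁻¹ Σ_{i=1}^n ‖F_i‖²` with `T = nτ`. -/
theorem discrete_stability
    {X : Type*} [NormedAddCommGroup X] [InnerProductSpace ℝ X] [CompleteSpace X]
    (C τ : ℝ) (hC : 0 ≤ C) (hτ : 0 < τ) (n : ℕ) (hn : 0 < n)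
    (R : ℕ → X →L[ℝ] X)
    (hR : ∀ i, 1 ≤ i → i ≤ n → ∀ x : X, ⟪R i x, x⟫ ≤ C * ‖x‖ ^ 2)
    (F : ℕ → X) (e : ℕ → X) (he0 : e 0 = 0)
    (heq : ∀ i, 1 ≤ i → i ≤ n → e i = e (i - 1) + τ • R i (e i) + F i)
    (hsmall : (2 * C + 1) * τ ≤ 1 / 2) :
    ∀ i ≤ n, ‖e i‖ ^ 2
      ≤ 2 * Real.exp (2 * (2 * C + 1) * (n * τ)) * τ⁻¹ * ∑ i ∈ Finset.Icc 1 n, ‖F i‖ ^ 2 := by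
  set a : ℝ := (2 * C + 1) * τ with ha
  have ha0 : 0 < a := by positivity
  have ha2 : a ≤ 1 / 2 := hsmall
  -- one-step recurrence
  have key : ∀ i, 1 ≤ i → i ≤ n →
      ‖e i‖ ^ 2 ≤ (1 + 2 * a) * (‖e (i - 1)‖ ^ 2 + τ⁻¹ * ‖F i‖ ^ 2) := by
    intro i h1 h2
    have hd : e i - e (i - 1) = τ • R i (e i) + F i := by
      nth_rewrite 1 [heq i h1 h2]; abel
    have hid : ‖e (i - 1)‖ ^ 2
        = ‖e i‖ ^ 2 - 2 * ⟪e i, e i - e (i - 1)⟫ + ‖e i - e (i - 1)‖ ^ 2 := by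
      have h := norm_sub_sq_real (e i) (e i - e (i - 1))
      simpa using h
    have hineq1 : ‖e i‖ ^ 2 ≤ ‖e (i - 1)‖ ^ 2 + 2 * ⟪e i, e i - e (i - 1)⟫ := by
      nlinarith [sq_nonneg ‖e i - e (i - 1)‖]
    have hsplit : ⟪e i, e i - e (i - 1)⟫ = τ * ⟪R i (e i), e i⟫ + ⟪e i, F i⟫ := by
      rw [hd, inner_add_right, real_inner_smul_right, real_inner_comm (e i) (R i (e i))]
    have hRc : ⟪R i (e i), e i⟫ ≤ C * ‖e i‖ ^ 2 := hR i h1 h2 (e i)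
    have hCS : ⟪e i, F i⟫ ≤ ‖e i‖ * ‖F i‖ := real_inner_le_norm _ _
    have hYoung : 2 * (‖e i‖ * ‖F i‖) ≤ τ * ‖e i‖ ^ 2 + τ⁻¹ * ‖F i‖ ^ 2 := by
      have h := sq_nonneg (τ * ‖e i‖ - ‖F i‖)
      have hτ' : τ⁻¹ > 0 := inv_pos.mpr hτ
      have : τ ^ 2 * ‖e i‖ ^ 2 - 2 * τ * (‖e i‖ * ‖F i‖) + ‖F i‖ ^ 2 ≥ 0 := by nlinarith
      have hmul : τ * τ⁻¹ = 1 := mul_inv_cancel₀ (ne_of_gt hτ)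
      nlinarith [this, hτ', hmul]
    have hstep : ‖e i‖ ^ 2 ≤ ‖e (i - 1)‖ ^ 2 + a * ‖e i‖ ^ 2 + τ⁻¹ * ‖F i‖ ^ 2 := by
      have h2τC : 2 * (τ * ⟪R i (e i), e i⟫) ≤ 2 * τ * (C * ‖e i‖ ^ 2) := by
        nlinarith [hτ.le]
      nlinarith [hineq1, hsplit, hCS, hYoung]
    have hE0 : (0 : ℝ) ≤ ‖e i‖ ^ 2 := sq_nonneg _
    have hRHS0 : (0 : ℝ) ≤ ‖e (i - 1)‖ ^ 2 + τ⁻¹ * ‖F i‖ ^ 2 := by positivity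
    have h1a : (1 - a) * ‖e i‖ ^ 2 ≤ ‖e (i - 1)‖ ^ 2 + τ⁻¹ * ‖F i‖ ^ 2 := by linarith
    have h2a : ‖e i‖ ^ 2 ≤ (1 + 2 * a) * ((1 - a) * ‖e i‖ ^ 2) := by
      nlinarith [mul_nonneg (mul_nonneg ha0.le (by linarith : (0:ℝ) ≤ 1 - 2 * a)) hE0]
    calc ‖e i‖ ^ 2 ≤ (1 + 2 * a) * ((1 - a) * ‖e i‖ ^ 2) := h2a
      _ ≤ (1 + 2 * a) * (‖e (i - 1)‖ ^ 2 + τ⁻¹ * ‖F i‖ ^ 2) :=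
        mul_le_mul_of_nonneg_left h1a (by linarith)
  -- induction
  have main : ∀ i, i ≤ n →
      ‖e i‖ ^ 2 ≤ (1 + 2 * a) ^ i * (τ⁻¹ * ∑ j ∈ Finset.Icc 1 i, ‖F j‖ ^ 2) := by
    intro i
    induction i with
    | zero => intro _; simp [he0]
    | succ k ih =>
      intro hk
      have hk' : k ≤ n := Nat.le_of_succ_le hk
      have ihk := ih hk'
      have hrec := key (k + 1) (Nat.succ_le_succ (Nat.zero_le k)) hk
      simp only [Nat.add_sub_cancel] at hrec
      have hsum : ∑ j ∈ Finset.Icc 1 (k + 1), ‖F j‖ ^ 2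
          = (∑ j ∈ Finset.Icc 1 k, ‖F j‖ ^ 2) + ‖F (k + 1)‖ ^ 2 :=
        Finset.sum_Icc_succ_top (Nat.one_le_iff_ne_zero.mpr (Nat.succ_ne_zero k)) _
      have hpow1 : (1 : ℝ) ≤ (1 + 2 * a) ^ k := one_le_pow₀ (by linarith)
      have hf0 : (0 : ℝ) ≤ ‖F (k + 1)‖ ^ 2 := sq_nonneg _
      have hτi : (0 : ℝ) < τ⁻¹ := inv_pos.mpr hτ
      have hS0 : (0 : ℝ) ≤ ∑ j ∈ Finset.Icc 1 k, ‖F j‖ ^ 2 :=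
        Finset.sum_nonneg fun _ _ => sq_nonneg _
      rw [hsum, pow_succ]
      have h1 : ‖e (k + 1)‖ ^ 2
          ≤ (1 + 2 * a) * ((1 + 2 * a) ^ k * (τ⁻¹ * ∑ j ∈ Finset.Icc 1 k, ‖F j‖ ^ 2)
              + τ⁻¹ * ‖F (k + 1)‖ ^ 2) := by
        calc ‖e (k + 1)‖ ^ 2 ≤ (1 + 2 * a) * (‖e k‖ ^ 2 + τ⁻¹ * ‖F (k + 1)‖ ^ 2) := hrec
          _ ≤ _ := by
            apply mul_le_mul_of_nonneg_left _ (by linarith)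
            linarith [ihk]
      calc ‖e (k + 1)‖ ^ 2 ≤ _ := h1
        _ ≤ (1 + 2 * a) ^ k * (1 + 2 * a)
            * (τ⁻¹ * ((∑ j ∈ Finset.Icc 1 k, ‖F j‖ ^ 2) + ‖F (k + 1)‖ ^ 2)) := by
          nlinarith [mul_nonneg hτi.le hf0, mul_nonneg (mul_nonneg hτi.le hf0)
            (by linarith : (0:ℝ) ≤ (1 + 2 * a) ^ k - 1)]
  -- conclude
  intro i hi
  have hmi := main i hi
  have hpow : (1 + 2 * a) ^ i ≤ Real.exp (2 * (2 * C + 1) * (n * τ)) := by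
    have h1 : (1 + 2 * a) ≤ Real.exp (2 * a) := by
      have := Real.add_one_le_exp (2 * a)
      linarith
    have h2 : (1 + 2 * a) ^ i ≤ Real.exp (2 * a) ^ i :=
      pow_le_pow_left₀ (by linarith) h1 i
    have h3 : Real.exp (2 * a) ^ i ≤ Real.exp (2 * a) ^ n :=
      pow_le_pow_right₀ (Real.one_le_exp (by linarith)) hi
    have h4 : Real.exp (2 * a) ^ n = Real.exp (2 * (2 * C + 1) * (n * τ)) := by
      rw [← Real.exp_nat_mul]
      rw [ha]
      ring_nf
    calc (1 + 2 * a) ^ i ≤ Real.exp (2 * a) ^ i := h2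
      _ ≤ Real.exp (2 * a) ^ n := h3
      _ = _ := h4.le.antisymm h4.ge
  have hSi : ∑ j ∈ Finset.Icc 1 i, ‖F j‖ ^ 2 ≤ ∑ j ∈ Finset.Icc 1 n, ‖F j‖ ^ 2 :=
    Finset.sum_le_sum_of_subset_of_nonneg
      (Finset.Icc_subset_Icc_right hi) (fun _ _ _ => sq_nonneg _)
  have hτi : (0 : ℝ) < τ⁻¹ := inv_pos.mpr hτ
  have hSn : (0 : ℝ) ≤ ∑ j ∈ Finset.Icc 1 n, ‖F j‖ ^ 2 :=
    Finset.sum_nonneg fun _ _ => sq_nonneg _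
  have hSi0 : (0 : ℝ) ≤ ∑ j ∈ Finset.Icc 1 i, ‖F j‖ ^ 2 :=
    Finset.sum_nonneg fun _ _ => sq_nonneg _
  have hexp0 : (0 : ℝ) < Real.exp (2 * (2 * C + 1) * (n * τ)) := Real.exp_pos _
  have hpow0 : (0 : ℝ) ≤ (1 + 2 * a) ^ i := by positivity
  calc ‖e i‖ ^ 2 ≤ (1 + 2 * a) ^ i * (τ⁻¹ * ∑ j ∈ Finset.Icc 1 i, ‖F j‖ ^ 2) := hmi
    _ ≤ Real.exp (2 * (2 * C + 1) * (n * τ)) * (τ⁻¹ * ∑ j ∈ Finset.Icc 1 n, ‖F j‖ ^ 2) := by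
        apply mul_le_mul hpow (by
          apply mul_le_mul_of_nonneg_left hSi hτi.le) (by positivity) hexp0.le
    _ ≤ 2 * Real.exp (2 * (2 * C + 1) * (n * τ)) * τ⁻¹ * ∑ i ∈ Finset.Icc 1 n, ‖F i‖ ^ 2 := by
        nlinarith [mul_nonneg hτi.le hSn]
end
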